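/- arXiv:2403.15198 — 2 statements merged into one kernel-verified Lean document; each statement's English description precedes it below -/
import Mathlib

section
/- Let n ≥ 3, β ∈ ℝ₊^{n−1} with β_2 > 0, and μ ∈ (0,∞)ⁿ. The following are equivalent: (i) W^μ_β satisfies the Condorcet principle: for every profile V, every candidate c with n_{c,d}(V) ≥ 0 for all d ≠ c belongs to W^μ_β(V); (ii) P^μ_β satisfies the Condorcet principle: for every profile V and all i, j ∈ [n], if n_{i,j}(V) > 0 then there is no σ ∈ P^μ_β(V) with (j,i) ∈ adj(σ), and if n_{i,j}(V) = 0 then there exists σ ∈ P^μ_β(V) with (i,j) ∈ adj(σ) iff there exists π ∈ P^μ_β(V) with (j,i) ∈ adj(π); (iii) β_k = 0 for all k ≥ 3. -/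
open Finset

noncomputable section

/-- `i >_σ j`: candidate `i` is ranked above candidate `j` by `σ`
(where `σ i` is the candidate in position `i`). -/
def prefOver {n : ℕ} (σ : Equiv.Perm (Fin n)) (i j : Fin n) : Prop :=
  σ.symm i < σ.symm j

/-- `M(S,σ)`: the set of `>_σ`-maximal elements of `S` (a singleton when `S ≠ ∅`). -/
def bestSet {n : ℕ} (σ : Equiv.Perm (Fin n)) (S : Finset (Fin n)) : Finset (Fin n) :=
  S.filter fun x => ∀ y ∈ S, σ.symm x ≤ σ.symm y

/-- `△_S(σ,π) = M(S,σ) △ M(S,π)`. -/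
def topDiff {n : ℕ} (σ π : Equiv.Perm (Fin n)) (S : Finset (Fin n)) : Finset (Fin n) :=
  symmDiff (bestSet σ S) (bestSet π S)

/-- The `(β,μ)`-top-difference distance; `β i` is the weight of menus of size `i+2`. -/
def dTD (n : ℕ) (β : Fin (n - 1) → ℝ) (μ : Fin n → ℝ)
    (σ π : Equiv.Perm (Fin n)) : ℝ :=
  ∑ S ∈ Finset.univ.filter (fun S : Finset (Fin n) => 2 ≤ S.card),
    (if h : S.card - 2 < n - 1 then β ⟨S.card - 2, h⟩ else 0) *
      ∑ x ∈ topDiff σ π S, μ x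

def IsSemimetric {α : Type*} (d : α → α → ℝ) : Prop :=
  (∀ x y, 0 ≤ d x y) ∧ (∀ x y, d x y = d y x) ∧ (∀ x, d x x = 0) ∧
    (∀ x y z, d x z ≤ d x y + d y z)

def IsMetricFn {α : Type*} (d : α → α → ℝ) : Prop :=
  IsSemimetric d ∧ ∀ x y, d x y = 0 → x = y

/-- Cumulative distance of `σ` to a profile of voters. -/
def dProf (n : ℕ) (β : Fin (n - 1) → ℝ) (μ : Fin n → ℝ)
    (σ : Equiv.Perm (Fin n)) (V : List (Equiv.Perm (Fin n))) : ℝ :=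
  (V.map (dTD n β μ σ)).sum

/-- The median preference correspondence `P^μ_β`. -/
def Pmed (n : ℕ) (β : Fin (n - 1) → ℝ) (μ : Fin n → ℝ)
    (V : List (Equiv.Perm (Fin n))) : Set (Equiv.Perm (Fin n)) :=
  {σ | ∀ τ : Equiv.Perm (Fin n), dProf n β μ σ V ≤ dProf n β μ τ V}

/-- The winner set `W^μ_β`: candidates ranked first by some consensus ranking. -/
def Wmed (n : ℕ) (hn : 0 < n) (β : Fin (n - 1) → ℝ) (μ : Fin n → ℝ)
    (V : List (Equiv.Perm (Fin n))) : Set (Fin n) :=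
  {c | ∃ σ ∈ Pmed n β μ V, σ ⟨0, hn⟩ = c}

/-- `n_{i,j}(V)`: number of voters preferring `i` to `j` minus those preferring `j` to `i`. -/
def nij {n : ℕ} (V : List (Equiv.Perm (Fin n))) (i j : Fin n) : ℤ :=
  ((V.countP fun v => decide (v.symm i < v.symm j)) : ℤ) -
    ((V.countP fun v => decide (v.symm j < v.symm i)) : ℤ)

/-- `(i,j) ∈ adj(σ)`: `i >_σ j` and they occupy consecutive positions of `σ`. -/
def adjPair {n : ℕ} (σ : Equiv.Perm (Fin n)) (i j : Fin n) : Prop :=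
  σ.symm i < σ.symm j ∧ (σ.symm j : ℕ) = (σ.symm i : ℕ) + 1

set_option maxHeartbeats 1000000

namespace Stmt17Aux

variable {n : ℕ}

/-- pair cost -/
def PC (μ : Fin n → ℝ) (p q : Fin n) : ℝ := if p = q then 0 else μ p + μ q

lemma PC_comm (μ : Fin n → ℝ) (p q : Fin n) : PC μ p q = PC μ q p := by
  unfold PC
  split_ifs with h1 h2 h2 <;> simp_all [eq_comm, add_comm]

lemma PC_nonneg {μ : Fin n → ℝ} (hμ : ∀ i, 0 ≤ μ i) (p q : Fin n) : 0 ≤ PC μ p q := by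
  unfold PC; split_ifs with h
  · exact le_refl (0:ℝ)
  · exact add_nonneg (hμ p) (hμ q)

lemma PC_tri {μ : Fin n → ℝ} (hμ : ∀ i, 0 ≤ μ i) (x y z : Fin n) :
    PC μ x z ≤ PC μ x y + PC μ y z := by
  unfold PC
  split_ifs <;> first | rfl | simp_all | linarith [hμ x, hμ y, hμ z]
  all_goals linarith [hμ x, hμ y, hμ z]

lemma PC_eq_cases {μ : Fin n → ℝ} (hμ : ∀ i, 0 < μ i) {p q r : Fin n}
    (h : PC μ p q + PC μ p r - PC μ q r = 0) : p = q ∨ p = r := by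
  unfold PC at h
  split_ifs at h <;>
    first
      | (left; assumption)
      | (right; assumption)
      | (exfalso; subst_eqs <;> linarith [hμ p, hμ q, hμ r])
      | (exfalso; linarith [hμ p, hμ q, hμ r])

def wgt (n : ℕ) (β : Fin (n - 1) → ℝ) (S : Finset (Fin n)) : ℝ :=
  if h : S.card - 2 < n - 1 then β ⟨S.card - 2, h⟩ else 0

lemma wgt_nonneg {β : Fin (n-1) → ℝ} (hβ : ∀ k, 0 ≤ β k) (S : Finset (Fin n)) :
    0 ≤ wgt n β S := by
  unfold wgt; split_ifs
  · exact hβ _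
  · exact le_refl 0

lemma dTD_eq (β : Fin (n-1) → ℝ) (μ : Fin n → ℝ) (σ π : Equiv.Perm (Fin n)) :
    dTD n β μ σ π =
      ∑ S ∈ Finset.univ.filter (fun S : Finset (Fin n) => 2 ≤ S.card),
        wgt n β S * ∑ x ∈ topDiff σ π S, μ x := rfl

lemma bestSet_eq_singleton {σ : Equiv.Perm (Fin n)} {S : Finset (Fin n)} {x : Fin n}
    (hx : x ∈ S) (h : ∀ y ∈ S, σ.symm x ≤ σ.symm y) : bestSet σ S = {x} := by
  ext z
  simp only [bestSet, Finset.mem_filter, Finset.mem_singleton]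
  constructor
  · rintro ⟨hz, hall⟩
    have h1 := hall x hx
    have h2 := h z hz
    exact σ.symm.injective (le_antisymm h1 h2)
  · rintro rfl; exact ⟨hx, h⟩

lemma exists_bestSet (σ : Equiv.Perm (Fin n)) {S : Finset (Fin n)} (hS : S.Nonempty) :
    ∃ x, bestSet σ S = {x} := by
  obtain ⟨x, hxS, hmin⟩ := Finset.exists_min_image S (fun z => σ.symm z) hS
  exact ⟨x, bestSet_eq_singleton hxS hmin⟩

lemma bestSet_pair (σ : Equiv.Perm (Fin n)) {x y : Fin n} (hxy : x ≠ y) :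
    bestSet σ {x, y} = if σ.symm x < σ.symm y then {x} else {y} := by
  have hne : σ.symm x ≠ σ.symm y := fun h => hxy (σ.symm.injective h)
  split_ifs with h
  · refine bestSet_eq_singleton (by simp) ?_
    intro z hz
    rcases Finset.mem_insert.mp hz with rfl | hz
    · exact le_refl _
    · rw [Finset.mem_singleton] at hz; subst hz; exact h.le
  · have h' : σ.symm y < σ.symm x := lt_of_le_of_ne (not_lt.mp h) (Ne.symm hne)
    refine bestSet_eq_singleton (by simp) ?_
    intro z hz
    rcases Finset.mem_insert.mp hz with rfl | hz
    · exact h'.le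
    · rw [Finset.mem_singleton] at hz; subst hz; exact le_refl _

lemma sum_symmDiff_singleton (μ : Fin n → ℝ) (p q : Fin n) :
    (∑ x ∈ symmDiff ({p} : Finset (Fin n)) {q}, μ x) = PC μ p q := by
  unfold PC
  rcases eq_or_ne p q with rfl | hpq
  · simp [symmDiff_self]
  · rw [if_neg hpq]
    have : symmDiff ({p} : Finset (Fin n)) {q} = {p, q} := by
      ext z
      simp only [Finset.mem_symmDiff, Finset.mem_singleton, Finset.mem_insert]
      constructor
      · rintro (⟨rfl, -⟩ | ⟨rfl, -⟩) <;> simp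
      · rintro (rfl | rfl)
        · exact Or.inl ⟨rfl, hpq⟩
        · exact Or.inr ⟨rfl, Ne.symm hpq⟩
    rw [this, Finset.sum_pair hpq]

lemma sum_topDiff {σ π : Equiv.Perm (Fin n)} {S : Finset (Fin n)} {p q : Fin n}
    (μ : Fin n → ℝ) (h1 : bestSet σ S = {p}) (h2 : bestSet π S = {q}) :
    (∑ x ∈ topDiff σ π S, μ x) = PC μ p q := by
  rw [topDiff, h1, h2, sum_symmDiff_singleton]

lemma dTD_comm (β : Fin (n-1) → ℝ) (μ : Fin n → ℝ) (σ π : Equiv.Perm (Fin n)) :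
    dTD n β μ σ π = dTD n β μ π σ := by
  unfold dTD topDiff
  refine Finset.sum_congr rfl fun S _ => ?_
  rw [symmDiff_comm]

lemma dTD_self (β : Fin (n-1) → ℝ) (μ : Fin n → ℝ) (σ : Equiv.Perm (Fin n)) :
    dTD n β μ σ σ = 0 := by
  unfold dTD topDiff
  refine Finset.sum_eq_zero fun S _ => ?_
  rw [symmDiff_self]
  simp

lemma card_ge_nonempty {S : Finset (Fin n)} (h : 2 ≤ S.card) : S.Nonempty :=
  Finset.card_pos.mp (by omega)

lemma dTD_triangle {β : Fin (n-1) → ℝ} {μ : Fin n → ℝ} (hβ : ∀ k, 0 ≤ β k)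
    (hμ : ∀ i, 0 ≤ μ i) (x y z : Equiv.Perm (Fin n)) :
    dTD n β μ x z ≤ dTD n β μ x y + dTD n β μ y z := by
  rw [dTD_eq, dTD_eq, dTD_eq, ← Finset.sum_add_distrib]
  refine Finset.sum_le_sum fun S hS => ?_
  have hS2 : 2 ≤ S.card := (Finset.mem_filter.mp hS).2
  obtain ⟨tx, htx⟩ := exists_bestSet x (card_ge_nonempty hS2)
  obtain ⟨ty, hty⟩ := exists_bestSet y (card_ge_nonempty hS2)
  obtain ⟨tz, htz⟩ := exists_bestSet z (card_ge_nonempty hS2)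
  rw [sum_topDiff μ htx htz, sum_topDiff μ htx hty, sum_topDiff μ hty htz, ← mul_add]
  exact mul_le_mul_of_nonneg_left (PC_tri hμ tx ty tz) (wgt_nonneg hβ S)

lemma between_of_eq {β : Fin (n-1) → ℝ} {μ : Fin n → ℝ} (hβ : ∀ k, 0 ≤ β k)
    (hμ : ∀ i, 0 < μ i) {π u w : Equiv.Perm (Fin n)}
    (h : dTD n β μ π u + dTD n β μ π w = dTD n β μ u w)
    {S : Finset (Fin n)} (hS2 : 2 ≤ S.card) (hwS : 0 < wgt n β S) :
    bestSet π S = bestSet u S ∨ bestSet π S = bestSet w S := by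
  have hμ0 : ∀ i, 0 ≤ μ i := fun i => (hμ i).le
  set F := Finset.univ.filter (fun S : Finset (Fin n) => 2 ≤ S.card) with hF
  set g : Finset (Fin n) → ℝ := fun T =>
    wgt n β T * ((∑ x ∈ topDiff π u T, μ x) + (∑ x ∈ topDiff π w T, μ x)
      - (∑ x ∈ topDiff u w T, μ x)) with hg
  have hnn : ∀ T ∈ F, 0 ≤ g T := by
    intro T hT
    have hT2 : 2 ≤ T.card := (Finset.mem_filter.mp hT).2
    obtain ⟨tp, htp⟩ := exists_bestSet π (card_ge_nonempty hT2)
    obtain ⟨tu, htu⟩ := exists_bestSet u (card_ge_nonempty hT2)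
    obtain ⟨tw, htw⟩ := exists_bestSet w (card_ge_nonempty hT2)
    have hti : PC μ tu tw ≤ PC μ tu tp + PC μ tp tw := PC_tri hμ0 tu tp tw
    rw [hg]
    simp only
    rw [sum_topDiff μ htp htu, sum_topDiff μ htp htw, sum_topDiff μ htu htw]
    have : 0 ≤ PC μ tp tu + PC μ tp tw - PC μ tu tw := by
      rw [PC_comm μ tp tu]; linarith
    exact mul_nonneg (wgt_nonneg hβ T) this
  have hsum : ∑ T ∈ F, g T = 0 := by
    rw [hg]
    simp only [mul_add, mul_sub]
    rw [Finset.sum_sub_distrib, Finset.sum_add_distrib]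
    rw [← dTD_eq, ← dTD_eq, ← dTD_eq]
    linarith
  have hSF : S ∈ F := Finset.mem_filter.mpr ⟨Finset.mem_univ _, hS2⟩
  have hS0 : g S = 0 := (Finset.sum_eq_zero_iff_of_nonneg hnn).mp hsum S hSF
  obtain ⟨tp, htp⟩ := exists_bestSet π (card_ge_nonempty hS2)
  obtain ⟨tu, htu⟩ := exists_bestSet u (card_ge_nonempty hS2)
  obtain ⟨tw, htw⟩ := exists_bestSet w (card_ge_nonempty hS2)
  rw [hg] at hS0
  simp only at hS0
  rw [sum_topDiff μ htp htu, sum_topDiff μ htp htw, sum_topDiff μ htu htw] at hS0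
  have hX : PC μ tp tu + PC μ tp tw - PC μ tu tw = 0 := by
    rcases mul_eq_zero.mp hS0 with h' | h'
    · exact absurd h' (ne_of_gt hwS)
    · exact h'
  rcases PC_eq_cases hμ hX with rfl | rfl
  · left; rw [htp, htu]
  · right; rw [htp, htw]

lemma swap_lt_swap_iff {p q u w : Fin n} (hq : (q : ℕ) = (p : ℕ) + 1)
    (h1 : ¬(u = p ∧ w = q)) (h2 : ¬(u = q ∧ w = p)) :
    Equiv.swap p q u < Equiv.swap p q w ↔ u < w := by
  rw [Equiv.swap_apply_def, Equiv.swap_apply_def]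
  split_ifs <;> simp only [Fin.lt_def, Fin.ext_iff, Fin.val_mk] at * <;> omega

lemma mul_swap_symm_apply (σ : Equiv.Perm (Fin n)) (p q x : Fin n) :
    (σ * Equiv.swap p q).symm x = Equiv.swap p q (σ.symm x) := by
  rfl

lemma dTD_swap {β : Fin (n-1) → ℝ} {μ : Fin n → ℝ} (hn : 3 ≤ n)
    (hβ0 : ∀ k : Fin (n-1), 1 ≤ k.1 → β k = 0)
    (σ v : Equiv.Perm (Fin n)) {p q : Fin n} (hq : (q : ℕ) = (p : ℕ) + 1) :
    dTD n β μ (σ * Equiv.swap p q) v = dTD n β μ σ v +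
      β ⟨0, id (by omega : 0 + 0 < n - 1)⟩ * (μ (σ p) + μ (σ q)) *
        (if v.symm (σ p) < v.symm (σ q) then 1 else -1) := by
  have hpq : p ≠ q := by
    intro h; rw [h] at hq; omega
  have hij : σ p ≠ σ q := fun h => hpq (σ.injective h)
  set τ := σ * Equiv.swap p q with hτ
  set S₀ : Finset (Fin n) := {σ p, σ q} with hS₀
  have hS₀c : S₀.card = 2 := Finset.card_pair hij
  have hS₀F : S₀ ∈ Finset.univ.filter (fun S : Finset (Fin n) => 2 ≤ S.card) :=
    Finset.mem_filter.mpr ⟨Finset.mem_univ _, by omega⟩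
  rw [dTD_eq, dTD_eq]
  rw [Finset.sum_eq_sum_sdiff_singleton_add hS₀F, Finset.sum_eq_sum_sdiff_singleton_add hS₀F
    (fun S => wgt n β S * ∑ x ∈ topDiff σ v S, μ x)]
  have hrest : ∑ S ∈ (Finset.univ.filter (fun S : Finset (Fin n) => 2 ≤ S.card)) \ {S₀},
        wgt n β S * ∑ x ∈ topDiff τ v S, μ x =
      ∑ S ∈ (Finset.univ.filter (fun S : Finset (Fin n) => 2 ≤ S.card)) \ {S₀},
        wgt n β S * ∑ x ∈ topDiff σ v S, μ x := by
    refine Finset.sum_congr rfl fun S hS => ?_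
    have hSmem := Finset.mem_sdiff.mp hS
    have hS2 : 2 ≤ S.card := (Finset.mem_filter.mp hSmem.1).2
    have hSne : S ≠ S₀ := by simpa using hSmem.2
    by_cases hc2 : S.card = 2
    · obtain ⟨x, y, hxy, rfl⟩ := Finset.card_eq_two.mp hc2
      have hiff : τ.symm x < τ.symm y ↔ σ.symm x < σ.symm y := by
        rw [hτ, mul_swap_symm_apply, mul_swap_symm_apply]
        refine swap_lt_swap_iff hq ?_ ?_
        · rintro ⟨hx, hy⟩
          apply hSne
          rw [hS₀]
          have hx' : x = σ p := by rw [← hx]; simp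
          have hy' : y = σ q := by rw [← hy]; simp
          rw [hx', hy']
        · rintro ⟨hx, hy⟩
          apply hSne
          rw [hS₀]
          have hx' : x = σ q := by rw [← hx]; simp
          have hy' : y = σ p := by rw [← hy]; simp
          rw [hx', hy', Finset.pair_comm]
      have : bestSet τ {x, y} = bestSet σ {x, y} := by
        rw [bestSet_pair τ hxy, bestSet_pair σ hxy]
        by_cases hc : σ.symm x < σ.symm y
        · rw [if_pos (hiff.mpr hc), if_pos hc]
        · rw [if_neg (fun hh => hc (hiff.mp hh)), if_neg hc]
      rw [topDiff, topDiff, this]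
    · have hc3 : 3 ≤ S.card := by omega
      have hcle : S.card ≤ n := by
        simpa using Finset.card_le_univ S
      have hw0 : wgt n β S = 0 := by
        unfold wgt
        rw [dif_pos (by omega)]
        exact hβ0 _ (by simp; omega)
      rw [hw0, zero_mul, zero_mul]
  rw [hrest]
  have hwS₀ : wgt n β S₀ = β ⟨0, by omega⟩ := by
    unfold wgt
    rw [dif_pos (by omega : S₀.card - 2 < n - 1)]
    congr 1
    ext
    simp [hS₀c]
  have hplt : p < q := by rw [Fin.lt_def]; omega
  have hbσ : bestSet σ S₀ = {σ p} := by
    rw [hS₀, bestSet_pair σ hij]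
    rw [if_pos]
    simpa using hplt
  have hbτ : bestSet τ S₀ = {σ q} := by
    rw [hS₀, bestSet_pair τ hij]
    rw [if_neg]
    rw [hτ, mul_swap_symm_apply, mul_swap_symm_apply]
    simp only [Equiv.symm_apply_apply, Equiv.swap_apply_left, Equiv.swap_apply_right]
    exact not_lt.mpr hplt.le
  obtain ⟨tv, htv⟩ := exists_bestSet v (card_ge_nonempty (by omega : 2 ≤ S₀.card))
  have htv' : bestSet v S₀ = if v.symm (σ p) < v.symm (σ q) then {σ p} else {σ q} := by
    rw [hS₀, bestSet_pair v hij]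
  rw [sum_topDiff μ hbτ htv, sum_topDiff μ hbσ htv, hwS₀]
  by_cases hcv : v.symm (σ p) < v.symm (σ q)
  · rw [if_pos hcv] at htv' ⊢
    have : tv = σ p := by
      have := htv.symm.trans htv'
      simpa using this
    subst this
    rw [PC_comm]
    unfold PC
    rw [if_neg hij, if_pos rfl]
    ring
  · rw [if_neg hcv] at htv' ⊢
    have : tv = σ q := by
      have := htv.symm.trans htv'
      simpa using this
    subst this
    unfold PC
    rw [if_neg hij, if_pos rfl]
    ring

lemma nij_nil (i j : Fin n) : nij ([] : List (Equiv.Perm (Fin n))) i j = 0 := by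
  simp [nij]

lemma nij_cons (v : Equiv.Perm (Fin n)) (V : List (Equiv.Perm (Fin n))) (i j : Fin n) :
    nij (v :: V) i j =
      (if v.symm i < v.symm j then 1 else if v.symm j < v.symm i then -1 else 0)
        + nij V i j := by
  simp only [nij, List.countP_cons, decide_eq_true_eq]
  by_cases h1 : v.symm i < v.symm j
  · simp only [if_pos h1, if_neg (asymm h1)]
    push_cast; ring
  · by_cases h2 : v.symm j < v.symm i
    · simp only [if_neg h1, if_pos h2]
      push_cast; ring
    · simp only [if_neg h1, if_neg h2]
      push_cast; ring

lemma nij_anti (V : List (Equiv.Perm (Fin n))) (i j : Fin n) :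
    nij V j i = - nij V i j := by
  simp only [nij]; ring

lemma dProf_nil (β : Fin (n-1) → ℝ) (μ : Fin n → ℝ) (σ : Equiv.Perm (Fin n)) :
    dProf n β μ σ [] = 0 := rfl

lemma dProf_cons (β : Fin (n-1) → ℝ) (μ : Fin n → ℝ) (σ v : Equiv.Perm (Fin n))
    (V : List (Equiv.Perm (Fin n))) :
    dProf n β μ σ (v :: V) = dTD n β μ σ v + dProf n β μ σ V := by
  simp [dProf]

lemma dProf_swap {β : Fin (n-1) → ℝ} {μ : Fin n → ℝ} (hn : 3 ≤ n)
    (hβ0 : ∀ k : Fin (n-1), 1 ≤ k.1 → β k = 0)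
    (σ : Equiv.Perm (Fin n)) {p q : Fin n} (hq : (q : ℕ) = (p : ℕ) + 1)
    (V : List (Equiv.Perm (Fin n))) :
    dProf n β μ (σ * Equiv.swap p q) V = dProf n β μ σ V +
      β ⟨0, id (by omega : 0 + 0 < n - 1)⟩ * (μ (σ p) + μ (σ q)) * ((nij V (σ p) (σ q) : ℤ) : ℝ) := by
  have hpq : p ≠ q := by intro h; rw [h] at hq; omega
  have hij : σ p ≠ σ q := fun h => hpq (σ.injective h)
  induction V with
  | nil => rw [dProf_nil, dProf_nil, nij_nil]; push_cast; ring
  | cons v V ih =>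
    rw [dProf_cons, dProf_cons, dTD_swap hn hβ0 σ v hq, ih, nij_cons]
    have hvne : v.symm (σ p) ≠ v.symm (σ q) := fun h => hij (v.symm.injective h)
    rcases lt_or_gt_of_ne hvne with h | h
    · rw [if_pos h, if_pos h]
      push_cast; ring
    · rw [if_neg (asymm h), if_neg (asymm h), if_pos h]
      push_cast; ring

lemma fin_le_of_strictMono (f : Fin n → Fin n) (hf : StrictMono f) (i : Fin n) : i ≤ f i := by
  by_contra hlt
  push_neg at hlt
  have key : ∀ j : Fin (i.1 + 1), ((f ⟨j.1, by omega⟩ : Fin n) : ℕ) < i.1 := by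
    intro j
    have hj : (⟨j.1, by omega⟩ : Fin n) ≤ i := by
      rw [Fin.le_def]; simp; omega
    have := hf.monotone hj
    have h2 : (f ⟨j.1, by omega⟩ : Fin n) ≤ f i := this
    have h3 : (f i : ℕ) < i.1 := hlt
    rw [Fin.le_def] at h2
    omega
  set g : Fin (i.1 + 1) → Fin i.1 := fun j => ⟨(f ⟨j.1, by omega⟩ : Fin n), key j⟩ with hgdef
  have hginj : Function.Injective g := by
    intro j1 j2 hg
    have : (f ⟨j1.1, by omega⟩ : Fin n) = f ⟨j2.1, by omega⟩ := by
      rw [hgdef] at hg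
      simpa [Fin.ext_iff] using hg
    have := hf.injective this
    simpa [Fin.ext_iff] using this
  have := Fintype.card_le_of_injective g hginj
  simp only [Fintype.card_fin] at this
  omega

lemma perm_symm_eq_one (π : Equiv.Perm (Fin n)) (h : StrictMono ⇑π.symm) : π = 1 := by
  set f := ⇑π.symm with hf
  have hinv : StrictMono ⇑π := by
    intro x y hxy
    rcases lt_trichotomy (π x) (π y) with h' | h' | h'
    · exact h'
    · exact absurd (π.injective h') (ne_of_lt hxy)
    · have := h h'
      simp only [hf, Equiv.symm_apply_apply] at this
      exact absurd this (asymm hxy)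
  have le1 : ∀ i, i ≤ π.symm i := fin_le_of_strictMono _ h
  have le2 : ∀ i, i ≤ π i := fin_le_of_strictMono _ hinv
  ext i
  have h1 : π i ≤ π.symm (π i) := le1 (π i)
  rw [Equiv.symm_apply_apply] at h1
  have h2 := le2 i
  have : π i = i := le_antisymm h1 h2
  simp [this]

lemma exists_pmed (β : Fin (n-1) → ℝ) (μ : Fin n → ℝ) (V : List (Equiv.Perm (Fin n))) :
    ∃ σ, σ ∈ Pmed n β μ V := by
  obtain ⟨σ, -, hmin⟩ := Finset.exists_min_image Finset.univ
    (fun σ : Equiv.Perm (Fin n) => dProf n β μ σ V) ⟨1, Finset.mem_univ 1⟩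
  exact ⟨σ, fun τ => hmin τ (Finset.mem_univ τ)⟩

lemma le_of_bestSet_eq {σ : Equiv.Perm (Fin n)} {S : Finset (Fin n)} {x y : Fin n}
    (h : bestSet σ S = {x}) (hy : y ∈ S) : σ.symm x ≤ σ.symm y := by
  have hx : x ∈ bestSet σ S := h ▸ Finset.mem_singleton_self x
  exact (Finset.mem_filter.mp hx).2 y hy

lemma swap01_lt (hn : 3 ≤ n) {x y : Fin n} (hxy : x < y) (h : ¬(x.1 = 0 ∧ y.1 = 1)) :
    Equiv.swap (⟨0, by omega⟩ : Fin n) ⟨1, by omega⟩ x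
      < Equiv.swap (⟨0, by omega⟩ : Fin n) ⟨1, by omega⟩ y := by
  rw [Equiv.swap_apply_def, Equiv.swap_apply_def]
  split_ifs <;> simp only [Fin.lt_def, Fin.ext_iff, Fin.val_mk] at * <;> omega

lemma CE (n : ℕ) (hn : 3 ≤ n) (β : Fin (n-1) → ℝ) (hβ : ∀ k, 0 ≤ β k)
    (hβ2 : 0 < β ⟨0, id (by omega : 0 + 0 < n - 1)⟩) (μ : Fin n → ℝ) (hμ : ∀ i, 0 < μ i)
    (k : Fin (n-1)) (hk1 : 1 ≤ k.1) (hk : 0 < β k) :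
    ∃ V : List (Equiv.Perm (Fin n)),
      Pmed n β μ V = {1} ∧
      (∀ e : Fin n, e ≠ ⟨1, id (by omega : 0 + 1 < n)⟩ → 0 ≤ nij V ⟨1, id (by omega : 0 + 1 < n)⟩ e) ∧
      nij V ⟨0, id (by omega : 0 + 0 < n)⟩ ⟨1, id (by omega : 0 + 1 < n)⟩ = 0 := by
  have hμ0 : ∀ i, 0 ≤ μ i := fun i => (hμ i).le
  set a : Fin n := ⟨0, by omega⟩ with ha
  set b : Fin n := ⟨1, by omega⟩ with hb
  set c : Fin n := ⟨2, by omega⟩ with hc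
  have hab : a ≠ b := by simp [ha, hb, Fin.ext_iff]
  have hac : a ≠ c := by simp [ha, hc, Fin.ext_iff]
  have hbc : b ≠ c := by simp [hb, hc, Fin.ext_iff]
  have hab_lt : a < b := by rw [ha, hb]; exact Fin.mk_lt_mk.mpr (by omega)
  have hac_lt : a < c := by rw [ha, hc]; exact Fin.mk_lt_mk.mpr (by omega)
  have hbc_lt : b < c := by rw [hb, hc]; exact Fin.mk_lt_mk.mpr (by omega)
  set w2 : Equiv.Perm (Fin n) := Equiv.swap a c with hw2
  set w4 : Equiv.Perm (Fin n) := Equiv.swap a b with hw4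
  set V : List (Equiv.Perm (Fin n)) := [1, w2, 1, w4] with hV
  have hone : ∀ x : Fin n, (1 : Equiv.Perm (Fin n)).symm x = x := fun x => rfl
  have hsym2 : ∀ x : Fin n, w2.symm x = Equiv.swap a c x := fun x => by
    rw [hw2, Equiv.symm_swap]
  have hsym4 : ∀ x : Fin n, w4.symm x = Equiv.swap a b x := fun x => by
    rw [hw4, Equiv.symm_swap]
  have hprof : ∀ π, dProf n β μ π V =
      (dTD n β μ π 1 + dTD n β μ π w2) + (dTD n β μ π 1 + dTD n β μ π w4) := by
    intro π
    rw [hV, dProf_cons, dProf_cons, dProf_cons, dProf_cons, dProf_nil]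
    ring
  have tri1 : ∀ π, dTD n β μ 1 w2 ≤ dTD n β μ π 1 + dTD n β μ π w2 := by
    intro π
    have := dTD_triangle hβ hμ0 1 π w2
    rw [dTD_comm β μ 1 π] at this
    linarith
  have tri2 : ∀ π, dTD n β μ 1 w4 ≤ dTD n β μ π 1 + dTD n β μ π w4 := by
    intro π
    have := dTD_triangle hβ hμ0 1 π w4
    rw [dTD_comm β μ 1 π] at this
    linarith
  have hb1 : dProf n β μ 1 V = dTD n β μ 1 w2 + dTD n β μ 1 w4 := by
    rw [hprof 1, dTD_self]
    ring
  have h1P : (1 : Equiv.Perm (Fin n)) ∈ Pmed n β μ V := by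
    intro τ
    rw [hb1, hprof τ]
    linarith [tri1 τ, tri2 τ]
  have hwpair : ∀ x y : Fin n, x ≠ y → 0 < wgt n β {x, y} := by
    intro x y hxy
    unfold wgt
    rw [dif_pos]
    · convert hβ2 using 2
      apply Fin.ext
      simp [Finset.card_pair hxy]
    · rw [Finset.card_pair hxy]; omega
  have huniq : ∀ π ∈ Pmed n β μ V, π = 1 := by
    intro π hπ
    have hle : dProf n β μ π V ≤ dProf n β μ 1 V := hπ 1
    rw [hb1, hprof π] at hle
    have heq2 : dTD n β μ π 1 + dTD n β μ π w2 = dTD n β μ 1 w2 := by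
      linarith [tri1 π, tri2 π]
    have heq4 : dTD n β μ π 1 + dTD n β μ π w4 = dTD n β μ 1 w4 := by
      linarith [tri1 π, tri2 π]
    have hmono : ∀ x y : Fin n, x < y → ¬(x = a ∧ y = b) → π.symm x < π.symm y := by
      intro x y hxy hnab
      have hxyne : x ≠ y := ne_of_lt hxy
      have hcard : 2 ≤ ({x, y} : Finset (Fin n)).card := by
        rw [Finset.card_pair hxyne]
      have hbet := between_of_eq hβ hμ heq4 hcard (hwpair x y hxyne)
      have hb1' : bestSet (1 : Equiv.Perm (Fin n)) {x, y} = {x} := by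
        rw [bestSet_pair _ hxyne, if_pos (by rw [hone, hone]; exact hxy)]
      have hval : ¬(x.1 = 0 ∧ y.1 = 1) := by
        rintro ⟨h1, h2⟩
        exact hnab ⟨Fin.ext (by rw [ha]; exact h1), Fin.ext (by rw [hb]; exact h2)⟩
      have hw4' : bestSet w4 {x, y} = {x} := by
        rw [bestSet_pair _ hxyne, if_pos]
        rw [hsym4, hsym4, ha, hb]
        exact swap01_lt hn hxy hval
      have hb : bestSet π {x, y} = {x} := by
        rcases hbet with h' | h'
        · rw [h', hb1']
        · rw [h', hw4']
      have hle' := le_of_bestSet_eq hb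
        (Finset.mem_insert.mpr (Or.inr (Finset.mem_singleton_self y)))
      exact lt_of_le_of_ne hle' (fun h => hxyne (π.symm.injective h))
    set S0 : Finset (Fin n) := (Finset.range (k.1 + 2)).attachFin
      (fun m hm => by
        have h1 := Finset.mem_range.mp hm
        have h2 := k.2
        omega) with hS0
    have hS0card : S0.card = k.1 + 2 := by
      rw [hS0, Finset.card_attachFin, Finset.card_range]
    have haS0 : a ∈ S0 := by
      rw [hS0, Finset.mem_attachFin, Finset.mem_range]
      show (0:ℕ) < k.1 + 2
      omega
    have hbS0 : b ∈ S0 := by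
      rw [hS0, Finset.mem_attachFin, Finset.mem_range]
      show (1:ℕ) < k.1 + 2
      omega
    have hcS0 : c ∈ S0 := by
      rw [hS0, Finset.mem_attachFin, Finset.mem_range]
      show (2:ℕ) < k.1 + 2
      omega
    have hwS0 : 0 < wgt n β S0 := by
      have hlt : S0.card - 2 < n - 1 := by
        have := k.2
        omega
      unfold wgt
      rw [dif_pos hlt]
      have : (⟨S0.card - 2, hlt⟩ : Fin (n-1)) = k := by
        apply Fin.ext
        simp [hS0card]
      rw [this]
      exact hk
    have hbet0 := between_of_eq hβ hμ heq2 (by omega : 2 ≤ S0.card) hwS0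
    have hb10 : bestSet (1 : Equiv.Perm (Fin n)) S0 = {a} := by
      apply bestSet_eq_singleton haS0
      intro y hy
      rw [hone, hone, Fin.le_def]
      exact Nat.zero_le _
    have hw20 : bestSet w2 S0 = {c} := by
      apply bestSet_eq_singleton hcS0
      intro y hy
      rw [hsym2, hsym2, Equiv.swap_apply_right, Fin.le_def]
      exact Nat.zero_le _
    rcases hbet0 with h0 | h0
    · rw [hb10] at h0
      have hle' := le_of_bestSet_eq h0 hbS0
      have hltab : π.symm a < π.symm b :=
        lt_of_le_of_ne hle' (fun h => hab (π.symm.injective h))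
      have hsm : StrictMono ⇑π.symm := by
        intro x y hxy
        by_cases hcase : x = a ∧ y = b
        · obtain ⟨rfl, rfl⟩ := hcase
          exact hltab
        · exact hmono x y hxy hcase
      exact perm_symm_eq_one π hsm
    · rw [hw20] at h0
      have hle' := le_of_bestSet_eq h0 haS0
      have := hmono a c hac_lt (fun h => hbc h.2.symm)
      exact absurd this (not_lt.mpr hle')
  have hPmed : Pmed n β μ V = {1} := by
    apply Set.eq_singleton_iff_unique_mem.mpr
    exact ⟨h1P, huniq⟩
  have s2a : Equiv.swap a c a = c := Equiv.swap_apply_left a c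
  have s2b : Equiv.swap a c b = b := Equiv.swap_apply_of_ne_of_ne hab.symm hbc
  have s2c : Equiv.swap a c c = a := Equiv.swap_apply_right a c
  have s4a : Equiv.swap a b a = b := Equiv.swap_apply_left a b
  have s4b : Equiv.swap a b b = a := Equiv.swap_apply_right a b
  have s4c : Equiv.swap a b c = c := Equiv.swap_apply_of_ne_of_ne hac.symm hbc.symm
  have hnijab : nij V a b = 0 := by
    rw [hV, nij_cons, nij_cons, nij_cons, nij_cons, nij_nil]
    simp only [hone, hsym2, hsym4, s2a, s2b, s2c, s4a, s4b, s4c]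
    simp [hab_lt, hbc_lt, asymm hab_lt, asymm hbc_lt]
  have hnijbc : nij V b c = 2 := by
    rw [hV, nij_cons, nij_cons, nij_cons, nij_cons, nij_nil]
    simp only [hone, hsym2, hsym4, s2a, s2b, s2c, s4a, s4b, s4c]
    simp [hab_lt, hbc_lt, hac_lt, asymm hab_lt, asymm hbc_lt, asymm hac_lt]
  refine ⟨V, hPmed, ?_, hnijab⟩
  intro e hne
  have he3 := e.2
  have hene1 : e.1 ≠ 1 := by
    intro h
    exact hne (Fin.ext (by rw [hb]; exact h))
  by_cases he0 : e.1 = 0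
  · have hea : e = a := Fin.ext (by rw [ha]; exact he0)
    rw [hea, nij_anti, hnijab]
    norm_num
  · by_cases he2 : e.1 = 2
    · have hec : e = c := Fin.ext (by rw [hc]; exact he2)
      rw [hec, hnijbc]
      norm_num
    · have hea : e ≠ a := fun h => he0 (by rw [h, ha])
      have heb : e ≠ b := fun h => hene1 (by rw [h, hb])
      have hec : e ≠ c := fun h => he2 (by rw [h, hc])
      have s2e : Equiv.swap a c e = e := Equiv.swap_apply_of_ne_of_ne hea hec
      have s4e : Equiv.swap a b e = e := Equiv.swap_apply_of_ne_of_ne hea heb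
      have hae : a < e := by
        rw [Fin.lt_def]
        show (0:ℕ) < e.1
        omega
      have hbe : b < e := by
        rw [Fin.lt_def]
        show (1:ℕ) < e.1
        omega
      rw [hV, nij_cons, nij_cons, nij_cons, nij_cons, nij_nil]
      simp only [hone, hsym2, hsym4, s2a, s2b, s2c, s4a, s4b, s4c, s2e, s4e]
      simp [hae, hbe, asymm hae, asymm hbe]

lemma pos_i (hn : 3 ≤ n) {β : Fin (n-1) → ℝ} {μ : Fin n → ℝ}
    (hβ : ∀ k, 0 ≤ β k) (hμ : ∀ i, 0 < μ i)
    (hβ0 : ∀ k : Fin (n-1), 1 ≤ k.1 → β k = 0)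
    (V : List (Equiv.Perm (Fin n))) (c : Fin n)
    (hc : ∀ e, e ≠ c → 0 ≤ nij V c e) :
    ∃ σ ∈ Pmed n β μ V, σ ⟨0, id (by omega : 0 + 0 < n)⟩ = c := by
  have key : ∀ m : ℕ, ∀ σ, σ ∈ Pmed n β μ V → (σ.symm c).1 = m →
      ∃ τ ∈ Pmed n β μ V, τ ⟨0, id (by omega : 0 + 0 < n)⟩ = c := by
    intro m
    induction m using Nat.strong_induction_on with
    | _ m IH =>
      intro σ hσ hm
      by_cases h0 : m = 0
      · refine ⟨σ, hσ, ?_⟩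
        have hs : σ.symm c = ⟨0, by omega⟩ := Fin.ext (by rw [hm, h0])
        rw [← hs, Equiv.apply_symm_apply]
      · have hmn : m < n := hm ▸ (σ.symm c).2
        set p : Fin n := ⟨m - 1, by omega⟩ with hp
        set q : Fin n := σ.symm c with hqd
        have hpval : (p : ℕ) = m - 1 := rfl
        have hq : (q : ℕ) = (p : ℕ) + 1 := by
          rw [hpval, hm]
          omega
        have hstep := dProf_swap (μ := μ) hn hβ0 σ hq V
        have hσq : σ q = c := by rw [hqd]; exact σ.apply_symm_apply c
        have hne : σ p ≠ c := by
          rw [← hσq]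
          intro h
          have := σ.injective h
          have : (p : ℕ) = (q : ℕ) := congrArg Fin.val this
          omega
        have hcond := hc (σ p) hne
        have hnp : ((nij V (σ p) (σ q) : ℤ) : ℝ) ≤ 0 := by
          rw [hσq, nij_anti]
          push_cast
          have : (0:ℝ) ≤ ((nij V c (σ p) : ℤ) : ℝ) := by exact_mod_cast hcond
          linarith
        have h1 : (0:ℝ) ≤ β ⟨0, by omega⟩ * (μ (σ p) + μ (σ q)) :=
          mul_nonneg (hβ _) (by linarith [hμ (σ p), hμ (σ q)])
        have hτle : dProf n β μ (σ * Equiv.swap p q) V ≤ dProf n β μ σ V := by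
          rw [hstep]
          nlinarith
        have hτP : σ * Equiv.swap p q ∈ Pmed n β μ V := fun ρ => le_trans hτle (hσ ρ)
        have hτc : ((σ * Equiv.swap p q).symm c).1 = m - 1 := by
          rw [mul_swap_symm_apply, ← hqd, Equiv.swap_apply_right]
        exact IH (m - 1) (by omega) _ hτP hτc
  obtain ⟨σ0, hσ0⟩ := exists_pmed β μ V
  exact key _ σ0 hσ0 rfl

lemma pos_ii_aux (hn : 3 ≤ n) {β : Fin (n-1) → ℝ} {μ : Fin n → ℝ}
    (hβ0 : ∀ k : Fin (n-1), 1 ≤ k.1 → β k = 0)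
    (V : List (Equiv.Perm (Fin n))) (i j : Fin n) (h0 : nij V i j = 0)
    (h : ∃ σ ∈ Pmed n β μ V, adjPair σ i j) :
    ∃ π ∈ Pmed n β μ V, adjPair π j i := by
  obtain ⟨σ, hσ, hlt, hsucc⟩ := h
  set p : Fin n := σ.symm i with hpd
  set q : Fin n := σ.symm j with hqd
  have hq : (q : ℕ) = (p : ℕ) + 1 := hsucc
  have hstep := dProf_swap (μ := μ) hn hβ0 σ hq V
  have hσp : σ p = i := by rw [hpd]; exact σ.apply_symm_apply i
  have hσq : σ q = j := by rw [hqd]; exact σ.apply_symm_apply j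
  rw [hσp, hσq, h0] at hstep
  have heq : dProf n β μ (σ * Equiv.swap p q) V = dProf n β μ σ V := by
    rw [hstep]; push_cast; ring
  refine ⟨σ * Equiv.swap p q, fun ρ => heq ▸ hσ ρ, ?_, ?_⟩
  · rw [mul_swap_symm_apply, mul_swap_symm_apply, ← hpd, ← hqd,
      Equiv.swap_apply_left, Equiv.swap_apply_right]
    exact hlt
  · rw [mul_swap_symm_apply, mul_swap_symm_apply, ← hpd, ← hqd,
      Equiv.swap_apply_left, Equiv.swap_apply_right]
    exact hq

lemma pos_ii_one (hn : 3 ≤ n) {β : Fin (n-1) → ℝ} {μ : Fin n → ℝ}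
    (hβ : ∀ k, 0 ≤ β k) (hβ2 : 0 < β ⟨0, id (by omega : 0 + 0 < n - 1)⟩) (hμ : ∀ i, 0 < μ i)
    (hβ0 : ∀ k : Fin (n-1), 1 ≤ k.1 → β k = 0)
    (V : List (Equiv.Perm (Fin n))) (i j : Fin n) (hpos : 0 < nij V i j) :
    ¬ ∃ σ ∈ Pmed n β μ V, adjPair σ j i := by
  rintro ⟨σ, hσ, hlt, hsucc⟩
  set p : Fin n := σ.symm j with hpd
  set q : Fin n := σ.symm i with hqd
  have hq : (q : ℕ) = (p : ℕ) + 1 := hsucc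
  have hstep := dProf_swap (μ := μ) hn hβ0 σ hq V
  have hσp : σ p = j := by rw [hpd]; exact σ.apply_symm_apply j
  have hσq : σ q = i := by rw [hqd]; exact σ.apply_symm_apply i
  rw [hσp, hσq, nij_anti] at hstep
  have hmul : (0:ℝ) < β ⟨0, by omega⟩ * (μ j + μ i) :=
    mul_pos hβ2 (by linarith [hμ i, hμ j])
  have hncast : (0:ℝ) < ((nij V i j : ℤ) : ℝ) := by exact_mod_cast hpos
  have : dProf n β μ (σ * Equiv.swap p q) V < dProf n β μ σ V := by
    rw [hstep]
    push_cast
    nlinarith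
  exact absurd (hσ (σ * Equiv.swap p q)) (not_le.mpr this)

end Stmt17Aux

open Stmt17Aux in
set_option maxHeartbeats 1000000 in
theorem stmt17 (n : ℕ) (hn : 3 ≤ n) (β : Fin (n - 1) → ℝ)
    (hβ : ∀ k, 0 ≤ β k) (hβ2 : 0 < β ⟨0, by omega⟩)
    (μ : Fin n → ℝ) (hμ : ∀ i, 0 < μ i) :
    ((∀ (V : List (Equiv.Perm (Fin n))) (c : Fin n),
        (∀ e : Fin n, e ≠ c → 0 ≤ nij V c e) → c ∈ Wmed n (by omega) β μ V) ↔
      (∀ k : Fin (n - 1), 1 ≤ k.1 → β k = 0)) ∧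
    ((∀ (V : List (Equiv.Perm (Fin n))) (i j : Fin n),
        (0 < nij V i j → ¬ ∃ σ ∈ Pmed n β μ V, adjPair σ j i) ∧
        (nij V i j = 0 →
          ((∃ σ ∈ Pmed n β μ V, adjPair σ i j) ↔ ∃ π ∈ Pmed n β μ V, adjPair π j i))) ↔
      (∀ k : Fin (n - 1), 1 ≤ k.1 → β k = 0)) := by
  constructor
  · constructor
    · intro h
      by_contra hcon
      push_neg at hcon
      obtain ⟨k, hk1, hkne⟩ := hcon
      have hk : 0 < β k := lt_of_le_of_ne (hβ k) (Ne.symm hkne)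
      obtain ⟨V, hP, hcond, -⟩ := Stmt17Aux.CE n hn β hβ hβ2 μ hμ k hk1 hk
      obtain ⟨σ, hσ, htop⟩ := h V ⟨1, by omega⟩ hcond
      rw [hP, Set.mem_singleton_iff] at hσ
      subst hσ
      have h01 : ((⟨0, by omega⟩ : Fin n)) = ⟨1, by omega⟩ := htop
      simpa [Fin.ext_iff] using h01
    · intro hβ0 V c hc
      exact pos_i hn hβ hμ hβ0 V c hc
  · constructor
    · intro h
      by_contra hcon
      push_neg at hcon
      obtain ⟨k, hk1, hkne⟩ := hcon
      have hk : 0 < β k := lt_of_le_of_ne (hβ k) (Ne.symm hkne)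
      obtain ⟨V, hP, -, hab0⟩ := Stmt17Aux.CE n hn β hβ hβ2 μ hμ k hk1 hk
      have h2 := (h V ⟨0, by omega⟩ ⟨1, by omega⟩).2 hab0
      have hex : ∃ σ ∈ Pmed n β μ V, adjPair σ ⟨0, by omega⟩ ⟨1, by omega⟩ := by
        refine ⟨1, by rw [hP]; exact Set.mem_singleton_iff.mpr rfl, ?_, ?_⟩
        · show (⟨0, by omega⟩ : Fin n) < ⟨1, by omega⟩
          exact Fin.mk_lt_mk.mpr (by omega)
        · rfl
      obtain ⟨π, hπ, hadj⟩ := h2.mp hex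
      rw [hP, Set.mem_singleton_iff] at hπ
      subst hπ
      have h' : (⟨1, by omega⟩ : Fin n) < ⟨0, by omega⟩ := hadj.1
      rw [Fin.mk_lt_mk] at h'
      omega
    · intro hβ0 V i j
      refine ⟨pos_ii_one hn hβ hβ2 hμ hβ0 V i j, fun h0 => ?_⟩
      constructor
      · exact pos_ii_aux hn hβ0 V i j h0
      · refine pos_ii_aux hn hβ0 V j i ?_
        rw [nij_anti, h0]
        ring
end
end

section
/- Let β ∈ ℝ₊^{n−1} with β_2 > 0. Define the β-Spearman footrule distance d^apx_β(σ,π) := Σ_{x ∈ [n]} | f_β(|x^{↓,σ}|) − f_β(|x^{↓,π}|) | and γ_β := max_{h ∈ [n]} ( 1 + f_β(n−h)/f_β(n−(h−1)) ). Then for all σ, π ∈ S_n: d^apx_β(σ,π) ≤ d_β(σ,π) ≤ γ_β · d^apx_β(σ,π). -/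
open Finset

noncomputable section

/-- `x^{↓,σ}`: the set of candidates ranked strictly below `x` by `σ`. -/
def downSet {n : ℕ} (σ : Equiv.Perm (Fin n)) (x : Fin n) : Finset (Fin n) :=
  Finset.univ.filter fun i => σ.symm x < σ.symm i

/-- `f_β(t) = Σ_{k=2}^n β_k C(t,k-1)`. -/
def fβ (n : ℕ) (β : Fin (n - 1) → ℝ) (t : ℕ) : ℝ :=
  ∑ k : Fin (n - 1), β k * (t.choose (k.1 + 1) : ℝ)

/-- The `β`-Spearman footrule distance. -/
def dapx (n : ℕ) (β : Fin (n - 1) → ℝ) (σ π : Equiv.Perm (Fin n)) : ℝ :=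
  ∑ x : Fin n, |fβ n β (downSet σ x).card - fβ n β (downSet π x).card|

namespace Stmt18

variable {n : ℕ} {β : Fin (n - 1) → ℝ}

lemma fβ_nonneg (hβ : ∀ k, 0 ≤ β k) (t : ℕ) : 0 ≤ fβ n β t :=
  Finset.sum_nonneg fun k _ => mul_nonneg (hβ k) (Nat.cast_nonneg _)

lemma fβ_mono (hβ : ∀ k, 0 ≤ β k) {s t : ℕ} (h : s ≤ t) : fβ n β s ≤ fβ n β t := by
  refine Finset.sum_le_sum fun k _ => ?_
  exact mul_le_mul_of_nonneg_left (by exact_mod_cast Nat.choose_le_choose _ h) (hβ k)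

lemma fβ_pos (hn : 1 < n) (hβ : ∀ k, 0 ≤ β k) (hβ2 : 0 < β ⟨0, by omega⟩)
    {t : ℕ} (ht : 1 ≤ t) : 0 < fβ n β t := by
  unfold fβ
  have h0 : (⟨0, by omega⟩ : Fin (n-1)) ∈ (univ : Finset (Fin (n-1))) := mem_univ _
  refine Finset.sum_pos' (fun k _ => mul_nonneg (hβ k) (Nat.cast_nonneg _)) ⟨_, h0, ?_⟩
  have h1 : (t.choose 1 : ℝ) = t := by rw [Nat.choose_one_right]
  simp only [h1]
  exact mul_pos hβ2 (by exact_mod_cast ht)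

variable {n : ℕ} {β : Fin (n - 1) → ℝ}

lemma fβ_succ_sub (u : ℕ) :
    fβ n β (u + 1) - fβ n β u = ∑ k : Fin (n - 1), β k * (u.choose k.1 : ℝ) := by
  unfold fβ
  rw [← Finset.sum_sub_distrib]
  refine Finset.sum_congr rfl fun k _ => ?_
  have h2 : ((u+1).choose (k.1+1) : ℝ) = (u.choose k.1 : ℝ) + (u.choose (k.1+1) : ℝ) := by
    rw [Nat.choose_succ_succ' u k.1]
    push_cast
    ring
  rw [h2]
  ring

lemma gap_mono (hβ : ∀ k, 0 ≤ β k) {u v : ℕ} (h : u ≤ v) :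
    fβ n β (u + 1) - fβ n β u ≤ fβ n β (v + 1) - fβ n β v := by
  rw [fβ_succ_sub, fβ_succ_sub]
  refine Finset.sum_le_sum fun k _ => ?_
  exact mul_le_mul_of_nonneg_left (by exact_mod_cast Nat.choose_le_choose _ h) (hβ k)


lemma sum_gap_Ioc (F : ℕ → ℝ) {p q : ℕ} (h : p ≤ q) :
    ∑ t ∈ Finset.Ioc p q, (F t - F (t - 1)) = F q - F p := by
  induction q, h using Nat.le_induction with
  | base => simp
  | succ q hq ih =>
      have hins : Finset.Ioc p (q+1) = insert (q+1) (Finset.Ioc p q) := by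
        ext t
        simp only [Finset.mem_Ioc, Finset.mem_insert]
        omega
      rw [hins, Finset.sum_insert (by simp), ih]
      simp only [Nat.add_sub_cancel]
      ring

lemma downSet_card {σ : Equiv.Perm (Fin n)} (x : Fin n) :
    (downSet σ x).card = n - 1 - (σ.symm x : ℕ) := by
  have : downSet σ x = (Finset.Ioi (σ.symm x)).map ⟨σ, σ.injective⟩ := by
    ext i
    simp only [downSet, mem_filter, mem_univ, true_and, Finset.mem_map, Finset.mem_Ioi,
      Function.Embedding.coeFn_mk]
    constructor
    · intro h; exact ⟨σ.symm i, h, σ.apply_symm_apply i⟩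
    · rintro ⟨j, hj, rfl⟩; rwa [σ.symm_apply_apply]
  rw [this, Finset.card_map, Fin.card_Ioi]

lemma downSet_card_le {σ : Equiv.Perm (Fin n)} (x : Fin n) :
    (downSet σ x).card ≤ n - 1 := by
  rw [downSet_card]
  omega


lemma mem_downSet_iff {σ : Equiv.Perm (Fin n)} {y z : Fin n} :
    y ∈ downSet σ z ↔ (downSet σ y).card < (downSet σ z).card := by
  have hy : (σ.symm y : ℕ) < n := (σ.symm y).isLt
  have hz : (σ.symm z : ℕ) < n := (σ.symm z).isLt
  have h1 : y ∈ downSet σ z ↔ (σ.symm z : ℕ) < (σ.symm y : ℕ) := by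
    simp only [downSet, Finset.mem_filter, Finset.mem_univ, true_and, Fin.lt_def]
  rw [h1, downSet_card, downSet_card]
  omega

lemma downSet_card_inj {σ : Equiv.Perm (Fin n)} {y z : Fin n}
    (h : (downSet σ y).card = (downSet σ z).card) : y = z := by
  have hy : (σ.symm y : ℕ) < n := (σ.symm y).isLt
  have hz : (σ.symm z : ℕ) < n := (σ.symm z).isLt
  rw [downSet_card, downSet_card] at h
  have h2 : σ.symm y = σ.symm z := Fin.ext (by omega)
  have := congrArg σ h2
  simpa using this

lemma card_downSet_card_lt (σ : Equiv.Perm (Fin n)) {m : ℕ} (hm : m ≤ n) :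
    (univ.filter fun y : Fin n => (downSet σ y).card < m).card = m := by
  have hset : (univ.filter fun y : Fin n => (downSet σ y).card < m)
      = (univ.filter fun j : Fin n => n - m ≤ (j : ℕ)).map ⟨σ, σ.injective⟩ := by
    ext y
    simp only [mem_filter, mem_univ, true_and, Finset.mem_map, Function.Embedding.coeFn_mk]
    rw [downSet_card]
    constructor
    · intro h
      refine ⟨σ.symm y, ?_, σ.apply_symm_apply y⟩
      have := (σ.symm y).isLt
      omega
    · rintro ⟨j, hj, rfl⟩
      rw [σ.symm_apply_apply]
      have := j.isLt
      omega
  rw [hset, Finset.card_map]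
  rcases Nat.eq_zero_or_pos m with rfl | hmpos
  · rw [Finset.card_eq_zero]
    refine Finset.filter_eq_empty_iff.mpr fun {j} _ => ?_
    have := j.isLt
    omega
  · have hlt : n - m < n := by omega
    have : (univ.filter fun j : Fin n => n - m ≤ (j : ℕ)) = Finset.Ici (⟨n - m, hlt⟩ : Fin n) := by
      ext j
      simp only [mem_filter, mem_univ, true_and, Finset.mem_Ici, Fin.le_def]
    rw [this, Fin.card_Ici]
    simp only [Fin.val_mk]
    omega


/-- weight of a menu of size k -/
def wf (n : ℕ) (β : Fin (n - 1) → ℝ) (k : ℕ) : ℝ :=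
  if h : k - 2 < n - 1 then β ⟨k - 2, h⟩ else 0

lemma mem_bestSet_iff {σ : Equiv.Perm (Fin n)} {z : Fin n} {S : Finset (Fin n)} :
    z ∈ bestSet σ S ↔ z ∈ S ∧ S ⊆ insert z (downSet σ z) := by
  simp only [bestSet, mem_filter]
  constructor
  · rintro ⟨hz, h⟩
    refine ⟨hz, fun y hy => ?_⟩
    rcases eq_or_ne y z with rfl | hne
    · exact mem_insert_self _ _
    · refine mem_insert_of_mem ?_
      simp only [downSet, mem_filter, mem_univ, true_and]
      rcases lt_or_eq_of_le (h y hy) with h' | h'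
      · exact h'
      · exact absurd (σ.symm.injective h') hne.symm
  · rintro ⟨hz, h⟩
    refine ⟨hz, fun y hy => ?_⟩
    rcases mem_insert.mp (h hy) with rfl | h'
    · exact le_refl _
    · simp only [downSet, mem_filter, mem_univ, true_and] at h'
      exact le_of_lt h'

lemma mem_bestSet_pair_iff {σ π : Equiv.Perm (Fin n)} {z : Fin n} {S : Finset (Fin n)} :
    (z ∈ bestSet σ S ∧ z ∈ bestSet π S) ↔
      z ∈ S ∧ S ⊆ insert z (downSet σ z ∩ downSet π z) := by
  rw [mem_bestSet_iff, mem_bestSet_iff]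
  constructor
  · rintro ⟨⟨hz, h1⟩, ⟨-, h2⟩⟩
    refine ⟨hz, fun y hy => ?_⟩
    rcases mem_insert.mp (h1 hy) with rfl | hy1
    · exact mem_insert_self _ _
    rcases mem_insert.mp (h2 hy) with rfl | hy2
    · exact mem_insert_self _ _
    exact mem_insert_of_mem (mem_inter.mpr ⟨hy1, hy2⟩)
  · rintro ⟨hz, h⟩
    constructor <;> refine ⟨hz, fun y hy => ?_⟩ <;> rcases mem_insert.mp (h hy) with rfl | hy'
    · exact mem_insert_self _ _
    · exact mem_insert_of_mem (mem_inter.mp hy').1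
    · exact mem_insert_self _ _
    · exact mem_insert_of_mem (mem_inter.mp hy').2

/-- The key menu-counting lemma. -/
lemma count_menus (z : Fin n) (D : Finset (Fin n)) (hzD : z ∉ D) (hD : D.card ≤ n - 1) :
    ∑ S ∈ univ.filter (fun S : Finset (Fin n) => 2 ≤ S.card),
      wf n β S.card * (if z ∈ S ∧ S ⊆ insert z D then 1 else 0) = fβ n β D.card := by
  classical
  have step1 : ∑ S ∈ univ.filter (fun S : Finset (Fin n) => 2 ≤ S.card),
      wf n β S.card * (if z ∈ S ∧ S ⊆ insert z D then 1 else 0)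
      = ∑ S ∈ univ.filter (fun S : Finset (Fin n) =>
          2 ≤ S.card ∧ z ∈ S ∧ S ⊆ insert z D), wf n β S.card := by
    rw [Finset.sum_filter, Finset.sum_filter]
    refine Finset.sum_congr rfl fun S _ => ?_
    by_cases h1 : 2 ≤ S.card <;> by_cases h2 : z ∈ S ∧ S ⊆ insert z D <;>
      simp [h1, h2]
  rw [step1]
  -- biject with nonempty subsets of D
  have step2 : ∑ S ∈ univ.filter (fun S : Finset (Fin n) =>
          2 ≤ S.card ∧ z ∈ S ∧ S ⊆ insert z D), wf n β S.card
      = ∑ T ∈ D.powerset.filter (fun T => T.Nonempty), wf n β (T.card + 1) := by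
    refine Finset.sum_nbij' (fun S => S.erase z) (fun T => insert z T) ?_ ?_ ?_ ?_ ?_
    · intro S hS
      simp only [mem_filter, mem_univ, true_and] at hS
      obtain ⟨hc, hzS, hsub⟩ := hS
      simp only [mem_filter, mem_powerset]
      constructor
      · intro y hy
        have := hsub (Finset.mem_of_mem_erase hy)
        rcases mem_insert.mp this with rfl | h'
        · exact absurd rfl (Finset.ne_of_mem_erase hy)
        · exact h'
      · rw [← Finset.card_pos, Finset.card_erase_of_mem hzS]
        omega
    · intro T hT
      simp only [mem_filter, mem_powerset] at hT
      obtain ⟨hsub, hne⟩ := hT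
      have hzT : z ∉ T := fun h => hzD (hsub h)
      simp only [mem_filter, mem_univ, true_and]
      refine ⟨?_, mem_insert_self _ _, ?_⟩
      · rw [Finset.card_insert_of_notMem hzT]
        have := Finset.card_pos.mpr hne
        omega
      · exact Finset.insert_subset_insert _ hsub
    · intro S hS
      simp only [mem_filter, mem_univ, true_and] at hS
      exact Finset.insert_erase hS.2.1
    · intro T hT
      simp only [mem_filter, mem_powerset] at hT
      exact Finset.erase_insert (fun h => hzD (hT.1 h))
    · intro S hS
      simp only [mem_filter, mem_univ, true_and] at hS
      rw [Finset.card_erase_of_mem hS.2.1]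
      congr 1
      omega
  rw [step2]
  have hfβ : fβ n β D.card = ∑ k ∈ range (n-1), wf n β (k+2) * (D.card.choose (k+1) : ℝ) := by
    have : ∀ k : Fin (n-1), β k * (D.card.choose (k.1+1) : ℝ)
        = wf n β (k.1+2) * (D.card.choose (k.1+1) : ℝ) := by
      intro k
      have hk : (k.1 + 2) - 2 < n - 1 := by simpa using k.isLt
      unfold wf
      rw [dif_pos hk]
      congr 1
    unfold fβ
    rw [Finset.sum_congr rfl (fun k _ => this k)]
    exact Fin.sum_univ_eq_sum_range (fun k => wf n β (k+2) * (D.card.choose (k+1) : ℝ)) (n-1)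
  have key := Finset.sum_powerset_apply_card
    (fun j => if j = 0 then (0:ℝ) else wf n β (j + 1)) (x := D)
  have step3 : ∑ T ∈ D.powerset.filter (fun T => T.Nonempty), wf n β (T.card + 1)
      = ∑ T ∈ D.powerset, (if T.card = 0 then (0:ℝ) else wf n β (T.card + 1)) := by
    rw [Finset.sum_filter]
    refine Finset.sum_congr rfl fun T _ => ?_
    by_cases h : T.Nonempty
    · have h0 : T.card ≠ 0 := by have := Finset.card_pos.mpr h; omega
      simp [h, h0]
    · have h0 : T = ∅ := Finset.not_nonempty_iff_eq_empty.mp h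
      simp [h, h0]
  rw [step3, key, hfβ]
  rw [Finset.sum_range_succ']
  have hz0 : (D.card.choose 0) • (if (0:ℕ) = 0 then (0:ℝ) else wf n β (0 + 1)) = 0 := by simp
  rw [hz0, add_zero]
  have hterm : ∀ i ∈ range D.card, (D.card.choose (i+1)) • (if i + 1 = 0 then (0:ℝ) else wf n β (i + 1 + 1))
      = wf n β (i+2) * (D.card.choose (i+1) : ℝ) := by
    intro i _
    have : i + 1 ≠ 0 := by omega
    simp only [this, if_false, nsmul_eq_mul]
    ring_nf
  rw [Finset.sum_congr rfl hterm]
  refine Finset.sum_subset ?_ ?_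
  · intro i hi
    simp only [Finset.mem_range] at hi ⊢
    omega
  · intro i _ hi
    simp only [Finset.mem_range, not_lt] at hi
    have : D.card < i + 1 := by omega
    rw [Nat.choose_eq_zero_of_lt this]
    simp



-- imported from previous fragments (assume proven)
lemma not_mem_downSet_self {σ : Equiv.Perm (Fin n)} (z : Fin n) : z ∉ downSet σ z := by
  simp [downSet]

lemma cast_card (s : Finset (Fin n)) : (s.card : ℝ) = ∑ z, if z ∈ s then (1:ℝ) else 0 := by
  rw [Finset.sum_ite_mem]
  simp

lemma dTD_eq (σ π : Equiv.Perm (Fin n)) :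
    dTD n β (fun _ => 1) σ π
      = ∑ z : Fin n, (fβ n β (downSet σ z).card + fβ n β (downSet π z).card
          - 2 * fβ n β ((downSet σ z) ∩ (downSet π z)).card) := by
  classical
  have hsum1 : ∀ S : Finset (Fin n), (∑ x ∈ topDiff σ π S, (1:ℝ)) = ((topDiff σ π S).card : ℝ) := by
    intro S; rw [Finset.sum_const, nsmul_eq_mul, mul_one]
  have hpt : ∀ (S : Finset (Fin n)) (z : Fin n),
      (if z ∈ topDiff σ π S then (1:ℝ) else 0)
        = (if z ∈ bestSet σ S then (1:ℝ) else 0) + (if z ∈ bestSet π S then (1:ℝ) else 0)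
          - 2 * (if z ∈ bestSet σ S ∧ z ∈ bestSet π S then (1:ℝ) else 0) := by
    intro S z
    by_cases h1 : z ∈ bestSet σ S <;> by_cases h2 : z ∈ bestSet π S <;>
      simp [topDiff, Finset.mem_symmDiff, h1, h2] <;> norm_num
  calc dTD n β (fun _ => 1) σ π
      = ∑ S ∈ univ.filter (fun S : Finset (Fin n) => 2 ≤ S.card),
          wf n β S.card * ((topDiff σ π S).card : ℝ) := by
        unfold dTD wf
        exact Finset.sum_congr rfl fun S _ => by rw [hsum1]
    _ = ∑ S ∈ univ.filter (fun S : Finset (Fin n) => 2 ≤ S.card),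
          ∑ z : Fin n, wf n β S.card * (if z ∈ topDiff σ π S then (1:ℝ) else 0) := by
        refine Finset.sum_congr rfl fun S _ => ?_
        rw [cast_card, Finset.mul_sum]
    _ = ∑ z : Fin n, ∑ S ∈ univ.filter (fun S : Finset (Fin n) => 2 ≤ S.card),
          wf n β S.card * (if z ∈ topDiff σ π S then (1:ℝ) else 0) := Finset.sum_comm
    _ = ∑ z : Fin n,
          ((∑ S ∈ univ.filter (fun S : Finset (Fin n) => 2 ≤ S.card),
              wf n β S.card * (if z ∈ bestSet σ S then (1:ℝ) else 0))
          + (∑ S ∈ univ.filter (fun S : Finset (Fin n) => 2 ≤ S.card),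
              wf n β S.card * (if z ∈ bestSet π S then (1:ℝ) else 0))
          - 2 * (∑ S ∈ univ.filter (fun S : Finset (Fin n) => 2 ≤ S.card),
              wf n β S.card * (if z ∈ bestSet σ S ∧ z ∈ bestSet π S then (1:ℝ) else 0))) := by
        refine Finset.sum_congr rfl fun z _ => ?_
        rw [← Finset.sum_add_distrib, Finset.mul_sum, ← Finset.sum_sub_distrib]
        refine Finset.sum_congr rfl fun S _ => ?_
        rw [hpt S z]
        ring
    _ = ∑ z : Fin n, (fβ n β (downSet σ z).card + fβ n β (downSet π z).card
          - 2 * fβ n β ((downSet σ z) ∩ (downSet π z)).card) := by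
        refine Finset.sum_congr rfl fun z _ => ?_
        have e1 : ∑ S ∈ univ.filter (fun S : Finset (Fin n) => 2 ≤ S.card),
            wf n β S.card * (if z ∈ bestSet σ S then (1:ℝ) else 0) = fβ n β (downSet σ z).card := by
          rw [show (fun S : Finset (Fin n) => wf n β S.card * (if z ∈ bestSet σ S then (1:ℝ) else 0))
              = (fun S : Finset (Fin n) => wf n β S.card * (if z ∈ S ∧ S ⊆ insert z (downSet σ z) then (1:ℝ) else 0))
            from funext fun S => by rw [if_congr (mem_bestSet_iff) rfl rfl]]
          exact count_menus (β := β) z _ (not_mem_downSet_self z) (downSet_card_le z)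
        have e2 : ∑ S ∈ univ.filter (fun S : Finset (Fin n) => 2 ≤ S.card),
            wf n β S.card * (if z ∈ bestSet π S then (1:ℝ) else 0) = fβ n β (downSet π z).card := by
          rw [show (fun S : Finset (Fin n) => wf n β S.card * (if z ∈ bestSet π S then (1:ℝ) else 0))
              = (fun S : Finset (Fin n) => wf n β S.card * (if z ∈ S ∧ S ⊆ insert z (downSet π z) then (1:ℝ) else 0))
            from funext fun S => by rw [if_congr (mem_bestSet_iff) rfl rfl]]
          exact count_menus (β := β) z _ (not_mem_downSet_self z) (downSet_card_le z)
        have e3 : ∑ S ∈ univ.filter (fun S : Finset (Fin n) => 2 ≤ S.card),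
            wf n β S.card * (if z ∈ bestSet σ S ∧ z ∈ bestSet π S then (1:ℝ) else 0)
            = fβ n β ((downSet σ z) ∩ (downSet π z)).card := by
          rw [show (fun S : Finset (Fin n) => wf n β S.card * (if z ∈ bestSet σ S ∧ z ∈ bestSet π S then (1:ℝ) else 0))
              = (fun S : Finset (Fin n) => wf n β S.card * (if z ∈ S ∧ S ⊆ insert z ((downSet σ z) ∩ (downSet π z)) then (1:ℝ) else 0))
            from funext fun S => by rw [if_congr (mem_bestSet_pair_iff) rfl rfl]]
          refine count_menus (β := β) z _ ?_ ?_
          · intro h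
            exact not_mem_downSet_self (σ := σ) z (Finset.mem_inter.mp h).1
          · exact le_trans (Finset.card_le_card inter_subset_left) (downSet_card_le z)
        rw [e1, e2, e3]

lemma main_side (σ π : Equiv.Perm (Fin n)) (hβ : ∀ k, 0 ≤ β k)
    {R : ℝ} (hR1 : ∀ t : ℕ, t ≤ n - 1 → fβ n β t ≤ R * fβ n β (t+1)) (hR2 : R ≤ 1) :
    ∑ z : Fin n, (fβ n β (min (downSet σ z).card (downSet π z).card)
        - fβ n β ((downSet σ z) ∩ (downSet π z)).card)
      ≤ ∑ w : Fin n, (if (downSet π w).card < (downSet σ w).card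
          then R * (fβ n β (downSet σ w).card - fβ n β (downSet π w).card) else 0) := by
  classical
  set F : ℕ → ℝ := fβ n β with hF
  set a : Fin n → ℕ := fun z => (downSet σ z).card with ha
  set b : Fin n → ℕ := fun z => (downSet π z).card with hb
  set c : Fin n → ℕ := fun z => ((downSet σ z) ∩ (downSet π z)).card with hc
  have hcm : ∀ z, c z ≤ min (a z) (b z) := fun z =>
    le_min (Finset.card_le_card inter_subset_left) (Finset.card_le_card inter_subset_right)
  have hgap_nonneg : ∀ t : ℕ, 0 ≤ F t - F (t - 1) :=
    fun t => sub_nonneg.mpr (fβ_mono (β := β) hβ (Nat.sub_le t 1))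
  have hAy : ∀ y : Fin n, (downSet σ y).card = a y := fun _ => rfl
  have hBy : ∀ y : Fin n, (downSet π y).card = b y := fun _ => rfl
  -- step A+B+C : per z bound by sum over T z
  have perz : ∀ z : Fin n,
      F (min (a z) (b z)) - F (c z)
        ≤ ∑ w ∈ univ.filter (fun w => b w < min (a z) (b z) ∧ a z < a w),
            (F (a z) - F (a z - 1)) := by
    intro z
    set m := min (a z) (b z) with hm
    set T := univ.filter (fun w => b w < m ∧ a z < a w) with hT
    -- telescope
    have htel : F m - F (c z) = ∑ i ∈ range (m - c z), (F (c z + (i + 1)) - F (c z + i)) := by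
      rw [Finset.sum_range_sub (fun i => F (c z + i)) (m - c z)]
      have h : c z + (m - c z) = m := by have := hcm z; omega
      rw [h, Nat.add_zero]
    have hbound : ∀ i ∈ range (m - c z),
        F (c z + (i + 1)) - F (c z + i) ≤ F (a z) - F (a z - 1) := by
      intro i hi
      simp only [Finset.mem_range] at hi
      have h1 : c z + i + 1 ≤ m := by omega
      have h2 : m ≤ a z := min_le_left _ _
      have h3 : a z - 1 + 1 = a z := by omega
      have hgm := gap_mono (β := β) hβ (u := c z + i) (v := a z - 1) (by omega)
      rw [h3] at hgm
      exact le_trans (le_of_eq (by ring_nf; rfl)) hgm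
    have hcard : m - c z ≤ T.card := by
      have hmn : m ≤ n := by
        have h1 := downSet_card_le (σ := π) z
        rw [hBy z] at h1
        have h2 : m ≤ b z := min_le_right _ _
        omega
      have hY : (univ.filter fun y : Fin n => b y < m).card = m :=
        card_downSet_card_lt π hmn
      have hsub : (univ.filter fun y : Fin n => b y < m)
          ⊆ ((downSet σ z ∩ downSet π z) ∪ T) := by
        intro y hy
        simp only [Finset.mem_filter, Finset.mem_univ, true_and] at hy
        rcases lt_or_ge (a y) (a z) with hay | hay
        · refine Finset.mem_union_left _ (Finset.mem_inter.mpr ⟨?_, ?_⟩)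
          · refine mem_downSet_iff.mpr ?_
            rw [hAy y, hAy z]
            exact hay
          · refine mem_downSet_iff.mpr ?_
            rw [hBy y, hBy z]
            have : m ≤ b z := min_le_right _ _
            omega
        · rcases Nat.eq_or_lt_of_le hay with heq | hlt
          · exfalso
            have hyz : y = z := by
              refine downSet_card_inj (σ := σ) ?_
              rw [hAy y, hAy z]
              exact heq.symm
            subst hyz
            have : m ≤ b y := min_le_right _ _
            omega
          · refine Finset.mem_union_right _ ?_
            simp only [hT, Finset.mem_filter, Finset.mem_univ, true_and]
            exact ⟨hy, hlt⟩
      have h5 := Finset.card_le_card hsub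
      have hle := Finset.card_union_le (downSet σ z ∩ downSet π z) T
      rw [hY] at h5
      have h6 : ((downSet σ z ∩ downSet π z)).card = c z := rfl
      omega
    calc F m - F (c z)
        = ∑ i ∈ range (m - c z), (F (c z + i + 1) - F (c z + i)) := htel
      _ ≤ ∑ _i ∈ range (m - c z), (F (a z) - F (a z - 1)) := Finset.sum_le_sum hbound
      _ = ((m - c z : ℕ) : ℝ) * (F (a z) - F (a z - 1)) := by
          rw [Finset.sum_const, Finset.card_range, nsmul_eq_mul]
      _ ≤ (T.card : ℝ) * (F (a z) - F (a z - 1)) := by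
          have h1 : ((m - c z : ℕ) : ℝ) ≤ (T.card : ℝ) := by exact_mod_cast hcard
          have h2 : a z - 1 + 1 = a z ∨ a z = 0 := by omega
          have hg : 0 ≤ F (a z) - F (a z - 1) := hgap_nonneg (a z)
          exact mul_le_mul_of_nonneg_right h1 hg
      _ = ∑ w ∈ T, (F (a z) - F (a z - 1)) := by
          rw [Finset.sum_const, nsmul_eq_mul]
  -- sum and swap
  have swap : ∑ z : Fin n, ∑ w ∈ univ.filter (fun w => b w < min (a z) (b z) ∧ a z < a w),
        (F (a z) - F (a z - 1))
      = ∑ w : Fin n, ∑ z ∈ univ.filter (fun z => b w < min (a z) (b z) ∧ a z < a w),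
        (F (a z) - F (a z - 1)) := by
    have e1 : ∀ z : Fin n, ∑ w ∈ univ.filter (fun w => b w < min (a z) (b z) ∧ a z < a w),
        (F (a z) - F (a z - 1))
        = ∑ w : Fin n, (if b w < min (a z) (b z) ∧ a z < a w then F (a z) - F (a z - 1) else 0) := by
      intro z; rw [Finset.sum_filter]
    have e2 : ∀ w : Fin n, ∑ z ∈ univ.filter (fun z => b w < min (a z) (b z) ∧ a z < a w),
        (F (a z) - F (a z - 1))
        = ∑ z : Fin n, (if b w < min (a z) (b z) ∧ a z < a w then F (a z) - F (a z - 1) else 0) := by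
      intro w; rw [Finset.sum_filter]
    simp only [e1, e2]
    exact Finset.sum_comm
  -- per w bound
  have perw : ∀ w : Fin n,
      ∑ z ∈ univ.filter (fun z => b w < min (a z) (b z) ∧ a z < a w), (F (a z) - F (a z - 1))
        ≤ (if b w < a w then R * (F (a w) - F (b w)) else 0) := by
    intro w
    by_cases hbw : b w < a w
    · rw [if_pos hbw]
      set Z := univ.filter (fun z => b w < min (a z) (b z) ∧ a z < a w) with hZ
      have hinj : Set.InjOn a Z := by
        intro y _ z _ h
        refine downSet_card_inj (σ := σ) ?_
        rw [hAy y, hAy z]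
        exact h
      rw [← Finset.sum_image (f := fun t => F t - F (t - 1)) (g := a) (fun x hx y hy h => hinj hx hy h)]
      have hsub : Z.image a ⊆ Finset.Ioc (b w) (a w - 1) := by
        intro t ht
        simp only [Finset.mem_image] at ht
        obtain ⟨z, hz, rfl⟩ := ht
        simp only [hZ, Finset.mem_filter, Finset.mem_univ, true_and] at hz
        simp only [Finset.mem_Ioc]
        have h1 : min (a z) (b z) ≤ a z := min_le_left _ _
        omega
      have hle := Finset.sum_le_sum_of_subset_of_nonneg hsub
        (fun t _ _ => hgap_nonneg t)
      have htel : ∑ t ∈ Finset.Ioc (b w) (a w - 1), (F t - F (t - 1)) = F (a w - 1) - F (b w) :=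
        sum_gap_Ioc F (by omega)
      have hfin : F (a w - 1) - F (b w) ≤ R * (F (a w) - F (b w)) := by
        have h1 : F (a w - 1) ≤ R * F (a w) := by
          have haw : a w - 1 ≤ n - 1 := by
            have h := downSet_card_le (σ := σ) w
            rw [hAy w] at h
            omega
          have := hR1 (a w - 1) haw
          have heq : a w - 1 + 1 = a w := by omega
          rwa [heq] at this
        have h2 : R * F (b w) ≤ F (b w) := by
          have := fβ_nonneg (β := β) hβ (b w)
          nlinarith
        linarith
      calc ∑ t ∈ Z.image a, (F t - F (t - 1))
          ≤ ∑ t ∈ Finset.Ioc (b w) (a w - 1), (F t - F (t - 1)) := hle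
        _ = F (a w - 1) - F (b w) := htel
        _ ≤ R * (F (a w) - F (b w)) := hfin
    · rw [if_neg hbw]
      have hempty : univ.filter (fun z => b w < min (a z) (b z) ∧ a z < a w) = ∅ := by
        refine Finset.filter_eq_empty_iff.mpr fun {z} _ => ?_
        push_neg
        intro h1
        have : min (a z) (b z) ≤ a z := min_le_left _ _
        omega
      rw [hempty, Finset.sum_empty]
  calc ∑ z : Fin n, (F (min (a z) (b z)) - F (c z))
      ≤ ∑ z : Fin n, ∑ w ∈ univ.filter (fun w => b w < min (a z) (b z) ∧ a z < a w),
          (F (a z) - F (a z - 1)) := Finset.sum_le_sum fun z _ => perz z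
    _ = ∑ w : Fin n, ∑ z ∈ univ.filter (fun z => b w < min (a z) (b z) ∧ a z < a w),
          (F (a z) - F (a z - 1)) := swap
    _ ≤ ∑ w : Fin n, (if b w < a w then R * (F (a w) - F (b w)) else 0) :=
        Finset.sum_le_sum fun w _ => perw w


end Stmt18

theorem stmt18 (n : ℕ) (hn : 2 ≤ n) (β : Fin (n - 1) → ℝ)
    (hβ : ∀ k, 0 ≤ β k) (hβ2 : 0 < β ⟨0, by omega⟩)
    (σ π : Equiv.Perm (Fin n)) :
    dapx n β σ π ≤ dTD n β (fun _ => (1 : ℝ)) σ π ∧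
      dTD n β (fun _ => (1 : ℝ)) σ π ≤
        ((Finset.Icc 1 n).sup' (Finset.nonempty_Icc.mpr (by omega))
            (fun h => 1 + fβ n β (n - h) / fβ n β (n - (h - 1)))) *
          dapx n β σ π := by
  classical
  open Stmt18 in
  set F : ℕ → ℝ := fβ n β with hF
  have hFmono : ∀ {s t : ℕ}, s ≤ t → F s ≤ F t := fun h => fβ_mono (β := β) hβ h
  have hFnn : ∀ t, 0 ≤ F t := fun t => fβ_nonneg (β := β) hβ t
  have hFpos : ∀ t : ℕ, 1 ≤ t → 0 < F t := fun t ht => fβ_pos hn hβ hβ2 ht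
  set Γ : ℝ := ((Finset.Icc 1 n).sup' (Finset.nonempty_Icc.mpr (by omega))
      (fun h => 1 + fβ n β (n - h) / fβ n β (n - (h - 1)))) with hΓ
  have hR1 : ∀ t : ℕ, t ≤ n - 1 → F t ≤ (Γ - 1) * F (t + 1) := by
    intro t ht
    have hmem : n - t ∈ Finset.Icc 1 n := by
      rw [Finset.mem_Icc]; omega
    have h := Finset.le_sup' (f := fun h => 1 + fβ n β (n - h) / fβ n β (n - (h - 1))) hmem
    have e1 : n - (n - t) = t := by omega
    have e2 : n - ((n - t) - 1) = t + 1 := by omega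
    rw [e1, e2] at h
    have hpos : 0 < F (t + 1) := hFpos (t + 1) (by omega)
    rw [← hΓ] at h
    have hdiv : F t / F (t + 1) ≤ Γ - 1 := by
      have : (1 : ℝ) + F t / F (t+1) ≤ Γ := h
      linarith
    calc F t = (F t / F (t + 1)) * F (t + 1) := by field_simp
      _ ≤ (Γ - 1) * F (t + 1) := mul_le_mul_of_nonneg_right hdiv (le_of_lt hpos)
  have hR2 : Γ - 1 ≤ 1 := by
    have : Γ ≤ 2 := by
      rw [hΓ]
      refine Finset.sup'_le _ _ fun h hh => ?_
      rw [Finset.mem_Icc] at hh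
      have e : n - (h - 1) = (n - h) + 1 := by omega
      rw [e]
      have hpos : 0 < fβ n β ((n - h) + 1) := hFpos _ (by omega)
      have : fβ n β (n - h) / fβ n β ((n - h) + 1) ≤ 1 := by
        rw [div_le_one hpos]
        exact hFmono (by omega)
      linarith
    linarith
  -- abbreviations
  set a : Fin n → ℕ := fun z => (downSet σ z).card with ha
  set b : Fin n → ℕ := fun z => (downSet π z).card with hb
  set c : Fin n → ℕ := fun z => ((downSet σ z) ∩ (downSet π z)).card with hc
  have hca : ∀ z, c z ≤ a z := fun z => Finset.card_le_card inter_subset_left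
  have hcb : ∀ z, c z ≤ b z := fun z => Finset.card_le_card inter_subset_right
  have hid : dTD n β (fun _ => (1 : ℝ)) σ π = ∑ z : Fin n, (F (a z) + F (b z) - 2 * F (c z)) :=
    dTD_eq σ π
  have hdapx : dapx n β σ π = ∑ z : Fin n, |F (a z) - F (b z)| := rfl
  constructor
  · -- lower bound
    rw [hid, hdapx]
    refine Finset.sum_le_sum fun z _ => ?_
    have h1 : F (c z) ≤ F (a z) := hFmono (hca z)
    have h2 : F (c z) ≤ F (b z) := hFmono (hcb z)
    rw [abs_sub_le_iff]
    constructor <;> linarith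
  · -- upper bound
    have hsplit : ∀ z : Fin n, F (a z) + F (b z) - 2 * F (c z)
        = |F (a z) - F (b z)| + 2 * (F (min (a z) (b z)) - F (c z)) := by
      intro z
      rcases le_total (a z) (b z) with hab | hab
      · rw [min_eq_left hab, abs_of_nonpos (by linarith [hFmono hab])]
        ring
      · rw [min_eq_right hab, abs_of_nonneg (by linarith [hFmono hab])]
        ring
    have hmain1 := main_side (β := β) σ π hβ hR1 hR2
    have hmain2 := main_side (β := β) π σ hβ hR1 hR2
    have hAB : ∀ w : Fin n, (downSet σ w).card = a w := fun _ => rfl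
    have hBB : ∀ w : Fin n, (downSet π w).card = b w := fun _ => rfl
    have hCC : ∀ z : Fin n, ((downSet σ z) ∩ (downSet π z)).card = c z := fun _ => rfl
    have hCC2 : ∀ z : Fin n, ((downSet π z) ∩ (downSet σ z)).card = c z := fun z => by
      rw [inter_comm]
    have hminc : ∀ z : Fin n, min (b z) (a z) = min (a z) (b z) := fun z => Nat.min_comm _ _
    simp only [hAB, hBB, hCC, hCC2] at hmain1 hmain2
    simp only [hminc] at hmain2
    rw [← hF] at hmain1 hmain2
    have hsum2 : 2 * (∑ z : Fin n, (F (min (a z) (b z)) - F (c z)))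
        ≤ (Γ - 1) * ∑ z : Fin n, |F (a z) - F (b z)| := by
      have hcomb : (∑ w : Fin n, (if b w < a w
              then (Γ - 1) * (F (a w) - F (b w)) else 0))
          + (∑ w : Fin n, (if a w < b w
              then (Γ - 1) * (F (b w) - F (a w)) else 0))
          = ∑ w : Fin n, (Γ - 1) * |F (a w) - F (b w)| := by
        rw [← Finset.sum_add_distrib]
        refine Finset.sum_congr rfl fun w _ => ?_
        rcases lt_trichotomy (a w) (b w) with h | h | h
        · rw [if_neg (by omega), if_pos (by exact h), zero_add,
            abs_of_nonpos (by linarith [hFmono (le_of_lt h)])]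
          ring
        · rw [if_neg (by omega), if_neg (by omega), h]
          simp
        · rw [if_pos (by exact h), if_neg (by omega), add_zero,
            abs_of_nonneg (by linarith [hFmono (le_of_lt h)])]
      have := add_le_add hmain1 hmain2
      rw [hcomb] at this
      rw [← Finset.mul_sum] at this
      linarith
    rw [hid, hdapx]
    have hexp : ∑ z : Fin n, (F (a z) + F (b z) - 2 * F (c z))
        = (∑ z : Fin n, |F (a z) - F (b z)|)
          + 2 * (∑ z : Fin n, (F (min (a z) (b z)) - F (c z))) := by
      rw [Finset.mul_sum, ← Finset.sum_add_distrib]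
      exact Finset.sum_congr rfl fun z _ => hsplit z
    rw [hexp]
    nlinarith [Finset.sum_nonneg (fun z (_ : z ∈ (univ : Finset (Fin n))) => abs_nonneg (F (a z) - F (b z)))]
end
end
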